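/- Let α < 0 < β, ε > 0, and let p < q with ℓ := q − p, and let ℓ_α, ℓ_β ∈ [0, ε/2] be the phase lengths of [p,q]. Assume (β−α)(ℓ + ℓ_α − ℓ_β) > 4, and assume that there exists δ > 0 such that g(x/ε) = β for almost every x ∈ (p, p + δ), or that there exists δ > 0 such that g(x/ε) = β for almost every x ∈ (q − δ, q). Then there exist no v ∈ ℝ and no Lipschitz function n : [p,q] → [−1,1] with n(p) = −1, n(q) = 1 and n'(x) = v − g(x/ε) for almost every x ∈ [p,q]; that is, the edge is not calibrable. -/

import Mathlib

open MeasureTheory Set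

/-- The 1-periodic forcing term: `α` within distance `1/4` of the integers, `β` otherwise. -/
noncomputable def g (α β x : ℝ) : ℝ := if |x - (round x : ℝ)| ≤ 1/4 then α else β

/-- The edge `[p,q]` with endpoint values `a`, `b` is calibrated with velocity `v` by the
Lipschitz field `n : [p,q] → [-1,1]` satisfying `n' = v - g(·/ε)` a.e. on `[p,q]`. -/
def Calibrates (α β ε p q a b v : ℝ) (n : ℝ → ℝ) : Prop :=
  (∃ K : NNReal, LipschitzOnWith K n (Icc p q)) ∧
  (∀ x ∈ Icc p q, n x ∈ Icc (-1 : ℝ) 1) ∧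
  n p = a ∧ n q = b ∧
  ∀ᵐ x ∂(volume.restrict (Icc p q)), HasDerivAt n (v - g α β (x / ε)) x

open Filter Topology

private lemma slope_tendsto_aux {f : ℝ → ℝ} {c L : ℝ} (h : HasDerivAt f L c) :
    Tendsto (fun n : ℕ => (f (c + 1 / (n + 1)) - f c) / (1 / (n + 1))) atTop (𝓝 L) := by
  have hs := hasDerivAt_iff_tendsto_slope.1 h
  have hseq : Tendsto (fun n : ℕ => c + 1 / ((n : ℝ) + 1)) atTop (𝓝[≠] c) := by
    apply tendsto_nhdsWithin_of_tendsto_nhds_of_eventually_within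
    · simpa using tendsto_const_nhds.add (tendsto_one_div_add_atTop_nhds_zero_nat (𝕜 := ℝ))
    · filter_upwards with n
      have : (0:ℝ) < 1 / ((n:ℝ) + 1) := by positivity
      exact (by linarith : c < c + 1 / ((n:ℝ) + 1)).ne'
  have := hs.comp hseq
  convert this using 2 with n
  simp [slope, div_eq_inv_mul]

private lemma lip_ftc {f : ℝ → ℝ} {K : NNReal} (hf : LipschitzWith K f) {a b : ℝ}
    (hab : a ≤ b) {φ : ℝ → ℝ}
    (hφ : ∀ᵐ x ∂(volume.restrict (Ioc a b)), HasDerivAt f (φ x) x) :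
    ∫ x in a..b, φ x = f b - f a := by
  have hcont : Continuous f := hf.continuous
  set u : ℕ → ℝ := fun n => 1 / ((n : ℝ) + 1) with hu
  have hu0 : ∀ n, 0 < u n := fun n => by positivity
  set F : ℕ → ℝ → ℝ := fun n x => (f (x + u n) - f x) / u n with hF
  have h1 : Tendsto (fun n => ∫ x in Ioc a b, F n x) atTop (𝓝 (∫ x in Ioc a b, φ x)) := by
    apply tendsto_integral_of_dominated_convergence (fun _ => (K : ℝ))
    · intro n
      exact (((hcont.comp (continuous_id.add continuous_const)).sub hcont).div_const
        _).aestronglyMeasurable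
    · exact integrable_const _
    · intro n
      filter_upwards with x
      have hd := hf.dist_le_mul (x + u n) x
      rw [Real.dist_eq, Real.dist_eq] at hd
      have habs : |f (x + u n) - f x| ≤ K * u n := by
        simpa [abs_of_pos (hu0 n)] using hd
      rw [Real.norm_eq_abs, abs_div, abs_of_pos (hu0 n), div_le_iff₀ (hu0 n)]
      linarith
    · filter_upwards [hφ] with x hx
      exact slope_tendsto_aux hx
  have hfi : ∀ c d : ℝ, IntervalIntegrable f volume c d := fun c d =>
    hcont.intervalIntegrable c d
  set I : ℝ → ℝ := fun y => ∫ t in a..y, f t with hI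
  have hFn : ∀ n, ∫ x in Ioc a b, F n x
      = (I (b + u n) - I b) / u n - (I (a + u n) - I a) / u n := by
    intro n
    rw [← intervalIntegral.integral_of_le hab]
    have hshift : (∫ x in a..b, f (x + u n)) = I (b + u n) - I (a + u n) := by
      rw [intervalIntegral.integral_comp_add_right]
      have := intervalIntegral.integral_add_adjacent_intervals
        (hfi a (a + u n)) (hfi (a + u n) (b + u n))
      simp only [hI]
      linarith
    have hIa : I a = 0 := by simp [hI]
    have hsub : (∫ x in a..b, (f (x + u n) - f x))
        = (I (b + u n) - I (a + u n)) - I b := by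
      rw [intervalIntegral.integral_sub (Continuous.intervalIntegrable
        (by continuity : Continuous fun x : ℝ => f (x + u n)) a b) (hfi a b), hshift]
    calc (∫ x in a..b, F n x) = (∫ x in a..b, (f (x + u n) - f x)) / u n := by
          rw [← intervalIntegral.integral_div]
      _ = ((I (b + u n) - I (a + u n)) - I b) / u n := by rw [hsub]
      _ = (I (b + u n) - I b) / u n - (I (a + u n) - I a) / u n := by
          rw [hIa]; ring
  have hIder : ∀ c : ℝ, HasDerivAt I (f c) c := fun c =>
    intervalIntegral.integral_hasDerivAt_right (hfi a c)
      ⟨univ, univ_mem, hcont.aestronglyMeasurable.restrict⟩ hcont.continuousAt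
  have h2 : Tendsto (fun n => ∫ x in Ioc a b, F n x) atTop (𝓝 (f b - f a)) := by
    have := (slope_tendsto_aux (hIder b)).sub (slope_tendsto_aux (hIder a))
    simpa only [hFn] using this
  have := tendsto_nhds_unique h1 h2
  rw [intervalIntegral.integral_of_le hab, this]

/-- FTC for a function that is Lipschitz on `[p,q]` with an a.e. derivative on a
subinterval. -/
private lemma ftc_on {n : ℝ → ℝ} {K : NNReal} {p q : ℝ} (hn : LipschitzOnWith K n (Icc p q))
    {a b : ℝ} (hpa : p ≤ a) (hab : a ≤ b) (hbq : b ≤ q) {φ : ℝ → ℝ}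
    (hφ : ∀ᵐ x ∂(volume.restrict (Ioo a b)), HasDerivAt n (φ x) x) :
    ∫ x in a..b, φ x = n b - n a := by
  obtain ⟨f, hfK, hfe⟩ := hn.extend_real
  have hmem : ∀ᵐ x ∂(volume.restrict (Ioo a b)), x ∈ Ioo a b :=
    ae_restrict_mem measurableSet_Ioo
  have hφ' : ∀ᵐ x ∂(volume.restrict (Ioo a b)), HasDerivAt f (φ x) x := by
    filter_upwards [hφ, hmem] with x hx hxm
    apply hx.congr_of_eventuallyEq
    have hnhds : Ioo p q ∈ 𝓝 x :=
      isOpen_Ioo.mem_nhds ⟨lt_of_le_of_lt hpa hxm.1, lt_of_lt_of_le hxm.2 hbq⟩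
    filter_upwards [hnhds] with y hy
    exact (hfe (Ioo_subset_Icc_self hy)).symm
  have hIoc : volume.restrict (Ioo a b) = volume.restrict (Ioc a b) :=
    Measure.restrict_congr_set Ioo_ae_eq_Ioc
  rw [hIoc] at hφ'
  rw [lip_ftc hfK hab hφ', hfe ⟨hpa, hab.trans hbq⟩, hfe ⟨hpa.trans hab, hbq⟩]

private lemma g_measurable (α β : ℝ) : Measurable (g α β) := by
  have hset : {x : ℝ | |x - (round x : ℝ)| ≤ 1/4}
      = ⋃ m : ℤ, Icc ((m:ℝ) - 1/4) ((m:ℝ) + 1/4) := by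
    ext x
    simp only [mem_setOf_eq, mem_iUnion, mem_Icc]
    constructor
    · intro h
      obtain ⟨h1, h2⟩ := abs_le.1 h
      exact ⟨round x, by linarith, by linarith⟩
    · rintro ⟨m, h1, h2⟩
      have hr : round x = m := by
        rw [round_eq]
        apply Int.floor_eq_iff.2
        constructor <;> push_cast <;> linarith
      rw [hr, abs_le]
      constructor <;> linarith
  unfold g
  refine Measurable.ite ?_ measurable_const measurable_const
  exact hset ▸ MeasurableSet.iUnion fun m => measurableSet_Icc

private lemma gε_intervalIntegrable (α β ε p q : ℝ) :
    IntervalIntegrable (fun x => g α β (x / ε)) volume p q := by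
  have hm : Measurable fun x : ℝ => g α β (x / ε) :=
    (g_measurable α β).comp (measurable_id.div_const ε)
  rw [intervalIntegrable_iff]
  have hconst : IntegrableOn (fun _ : ℝ => |α| + |β|) (Set.uIoc p q) volume :=
    integrableOn_const measure_Ioc_lt_top.ne
  apply hconst.mono' hm.aestronglyMeasurable.restrict
  filter_upwards with x
  rw [Real.norm_eq_abs]
  unfold g
  split_ifs
  · linarith [abs_nonneg β]
  · linarith [abs_nonneg α]

theorem stmt8 (α β ε p q lα lβ : ℝ) (hα : α < 0) (hβ : 0 < β) (hε0 : 0 < ε)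
    (hpq : p < q)
    (hlα0 : 0 ≤ lα) (hlα1 : lα ≤ ε / 2) (hlβ0 : 0 ≤ lβ) (hlβ1 : lβ ≤ ε / 2)
    (hsum : lα + lβ = (q - p) - ε * (⌊(q - p) / ε⌋ : ℝ))
    (hint : ∫ s in p..q, g α β (s / ε)
      = (α + β) / 2 * ((q - p) - lα - lβ) + α * lα + β * lβ)
    (hcond : 4 < (β - α) * ((q - p) + lα - lβ))
    (hphase : (∃ δ > 0, ∀ᵐ x ∂(volume.restrict (Ioo p (p + δ))), g α β (x / ε) = β) ∨
              (∃ δ > 0, ∀ᵐ x ∂(volume.restrict (Ioo (q - δ) q)), g α β (x / ε) = β)) :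
    ¬ ∃ v : ℝ, ∃ n : ℝ → ℝ, Calibrates α β ε p q (-1) 1 v n := by
  rintro ⟨v, n, ⟨K, hK⟩, hbd, hnp, hnq, hder⟩
  have hderIoo : ∀ {a b : ℝ}, p ≤ a → b ≤ q →
      ∀ᵐ x ∂(volume.restrict (Ioo a b)), HasDerivAt n (v - g α β (x / ε)) x := by
    intro a b ha hb
    exact ae_restrict_of_ae_restrict_of_subset
      (Ioo_subset_Icc_self.trans (Icc_subset_Icc ha hb)) hder
  have hmain : (∫ x in p..q, (v - g α β (x / ε))) = 2 := by
    rw [ftc_on hK le_rfl hpq.le le_rfl (hderIoo le_rfl le_rfl), hnq, hnp]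
    norm_num
  have hsplit : (∫ x in p..q, (v - g α β (x / ε)))
      = v * (q - p) - ∫ s in p..q, g α β (s / ε) := by
    rw [intervalIntegral.integral_sub intervalIntegrable_const
      (gε_intervalIntegrable α β ε p q), intervalIntegral.integral_const, smul_eq_mul]
    ring
  have hvβ : β ≤ v := by
    rcases hphase with ⟨δ, hδ, hg⟩ | ⟨δ, hδ, hg⟩
    · set r := min (p + δ) q with hr
      have hpr : p < r := lt_min (by linarith) hpq
      have hrq : r ≤ q := min_le_right _ _
      have hg' : ∀ᵐ x ∂(volume.restrict (Ioo p r)), g α β (x / ε) = β :=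
        ae_restrict_of_ae_restrict_of_subset (Ioo_subset_Ioo le_rfl (min_le_left _ _)) hg
      have hd : ∀ᵐ x ∂(volume.restrict (Ioo p r)), HasDerivAt n (v - β) x := by
        filter_upwards [hderIoo le_rfl hrq, hg'] with x h1 h2
        rwa [h2] at h1
      have heq := ftc_on hK le_rfl hpr.le hrq hd
      rw [intervalIntegral.integral_const, hnp, smul_eq_mul] at heq
      have hnr := (hbd r ⟨hpr.le, hrq⟩).1
      by_contra hvlt
      push_neg at hvlt
      nlinarith
    · set r := max (q - δ) p with hr
      have hrq : r < q := max_lt (by linarith) hpq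
      have hpr : p ≤ r := le_max_right _ _
      have hg' : ∀ᵐ x ∂(volume.restrict (Ioo r q)), g α β (x / ε) = β :=
        ae_restrict_of_ae_restrict_of_subset (Ioo_subset_Ioo (le_max_left _ _) le_rfl) hg
      have hd : ∀ᵐ x ∂(volume.restrict (Ioo r q)), HasDerivAt n (v - β) x := by
        filter_upwards [hderIoo hpr le_rfl, hg'] with x h1 h2
        rwa [h2] at h1
      have heq := ftc_on hK hpr hrq.le le_rfl hd
      rw [intervalIntegral.integral_const, hnq, smul_eq_mul] at heq
      have hnr := (hbd r ⟨hpr, hrq.le⟩).2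
      by_contra hvlt
      push_neg at hvlt
      nlinarith
  have hqp : (0:ℝ) ≤ q - p := by linarith
  nlinarith [mul_le_mul_of_nonneg_right hvβ hqp, hmain, hsplit, hint, hcond]
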